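/- arXiv:1809.07060 — 2 statements merged into one kernel-verified Lean document; each statement's English description precedes it below -/
import Mathlib

section
/- If f and g are moreover continuously differentiable, then h is twice differentiable, and at every point θ with f(ĥ(θ)) = f(θ) one has h″(θ) = g(θ)²·( f′(ĥ(θ))/g(ĥ(θ)) − f′(θ)/g(θ) ). -/
open intervalIntegral

private lemma ftc_hasDerivAt {g : ℝ → ℝ} (hgc : Continuous g) (x : ℝ) :
    HasDerivAt (fun u => ∫ t in (0:ℝ)..u, g t) (g x) x :=
  intervalIntegral.integral_hasDerivAt_right (hgc.intervalIntegrable 0 x)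
    (hgc.stronglyMeasurableAtFilter _ _) hgc.continuousAt

/-- If `f` and `g` are moreover continuously differentiable, then the
single-sensor objective `h(θ) = ∫_θ^{ĥ(θ)} f g` is twice differentiable, and at
every point `θ` with `f(ĥ(θ)) = f(θ)` one has
`h″(θ) = g(θ)²·( f′(ĥ(θ))/g(ĥ(θ)) − f′(θ)/g(θ) )`. -/
theorem single_sensor_objective_second_deriv
    (g : ℝ → ℝ) (hg : ContDiff ℝ 1 g)
    (hgper : Function.Periodic g (2 * Real.pi))
    (hgpos : ∀ x, 0 < g x)
    (ℓ : ℝ) (hℓ : ℓ ∈ Set.Ioo 0 (∫ s in (0:ℝ)..(2 * Real.pi), g s))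
    (hhat : ℝ → ℝ)
    (hhat_mem : ∀ θ, hhat θ ∈ Set.Ioo θ (θ + 2 * Real.pi))
    (hhat_int : ∀ θ, (∫ s in θ..(hhat θ), g s) = ℓ)
    (f : ℝ → ℝ) (hf : ContDiff ℝ 1 f)
    (hfper : Function.Periodic f (2 * Real.pi))
    (h : ℝ → ℝ) (hdef : ∀ θ, h θ = ∫ s in θ..(hhat θ), f s * g s) :
    (∀ θ : ℝ, DifferentiableAt ℝ h θ) ∧
    (∀ θ : ℝ, DifferentiableAt ℝ (deriv h) θ) ∧
    (∀ θ : ℝ, f (hhat θ) = f θ →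
      deriv (deriv h) θ =
        g θ ^ 2 * (deriv f (hhat θ) / g (hhat θ) - deriv f θ / g θ)) := by
  have hgc : Continuous g := hg.continuous
  have hfc : Continuous f := hf.continuous
  have hgne : ∀ x, g x ≠ 0 := fun x => (hgpos x).ne'
  set G : ℝ → ℝ := fun x => ∫ t in (0:ℝ)..x, g t with hGdef
  have hGderiv : ∀ x, HasDerivAt G (g x) x := ftc_hasDerivAt hgc
  have hGcont : Continuous G := by
    have : Differentiable ℝ G := fun x => (hGderiv x).differentiableAt
    exact this.continuous
  have hGsub : ∀ a b : ℝ, G b - G a = ∫ t in a..b, g t := fun a b =>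
    intervalIntegral.integral_interval_sub_left (hgc.intervalIntegrable 0 b)
      (hgc.intervalIntegrable 0 a)
  have hGmono : StrictMono G := by
    intro a b hab
    have hpos : 0 < ∫ t in a..b, g t :=
      intervalIntegral.intervalIntegral_pos_of_pos (hgc.intervalIntegrable a b) hgpos hab
    have := hGsub a b
    linarith
  -- a uniform positive lower bound for g
  have h2pi : (0:ℝ) < 2 * Real.pi := by positivity
  obtain ⟨x₀, hx₀, hmin⟩ := isCompact_Icc.exists_isMinOn
    (Set.nonempty_Icc.2 h2pi.le) (hgc.continuousOn (s := Set.Icc 0 (2 * Real.pi)))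
  set δ : ℝ := g x₀ with hδdef
  have hδpos : 0 < δ := hgpos x₀
  have hδle : ∀ x, δ ≤ g x := by
    intro x
    obtain ⟨y, hy, hxy⟩ := hgper.exists_mem_Ico₀ h2pi x
    rw [hxy]
    exact hmin (Set.Ico_subset_Icc_self hy)
  -- G is surjective
  have hGtop : Filter.Tendsto G Filter.atTop Filter.atTop := by
    apply Filter.tendsto_atTop_mono' Filter.atTop
      (f₁ := fun x => δ * x)
    · filter_upwards [Filter.eventually_ge_atTop (0:ℝ)] with x hx
      have : (x - 0) * δ ≤ G x := by
        rw [hGdef]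
        have := intervalIntegral.integral_mono_on (μ := MeasureTheory.volume)
          (f := fun _ => δ) (g := g) hx (intervalIntegrable_const)
          (hgc.intervalIntegrable 0 x) (fun t _ => hδle t)
        simpa using this
      nlinarith
    · exact Filter.Tendsto.const_mul_atTop hδpos Filter.tendsto_id
  have hGbot : Filter.Tendsto G Filter.atBot Filter.atBot := by
    apply Filter.tendsto_atBot_mono' Filter.atBot
      (f₁ := fun x => δ * x)
    · filter_upwards [Filter.eventually_le_atBot (0:ℝ)] with x hx
      have h1 : (0 - x) * δ ≤ ∫ t in x..(0:ℝ), g t := by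
        have := intervalIntegral.integral_mono_on (μ := MeasureTheory.volume)
          (f := fun _ => δ) (g := g) hx (intervalIntegrable_const)
          (hgc.intervalIntegrable x 0) (fun t _ => hδle t)
        simpa using this
      have h2 := hGsub x 0
      have hG0 : G 0 = 0 := by simp [hGdef]
      nlinarith
    · exact Filter.Tendsto.const_mul_atBot hδpos Filter.tendsto_id
  have hGsurj : Function.Surjective G := hGcont.surjective hGtop hGbot
  set e := StrictMono.orderIsoOfSurjective G hGmono hGsurj with hedef
  set Ginv : ℝ → ℝ := fun y => e.symm y with hGinvdef
  have hGinvG : ∀ a, Ginv (G a) = a := fun a =>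
    StrictMono.orderIsoOfSurjective_symm_apply_self G hGmono hGsurj a
  have hGGinv : ∀ y, G (Ginv y) = y := by
    intro y
    obtain ⟨a, rfl⟩ := hGsurj y
    rw [hGinvG]
  have hGinvcont : Continuous Ginv := by
    have : Continuous (e.toHomeomorph.symm) := Homeomorph.continuous _
    exact this
  have hGinvDeriv : ∀ y, HasDerivAt Ginv (g (Ginv y))⁻¹ y := fun y =>
    HasDerivAt.of_local_left_inverse hGinvcont.continuousAt (hGderiv (Ginv y))
      (hgne _) (Filter.Eventually.of_forall hGGinv)
  have hhat_eq : ∀ θ, hhat θ = Ginv (G θ + ℓ) := by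
    intro θ
    have h1 : G (hhat θ) = G θ + ℓ := by
      have := hGsub θ (hhat θ)
      rw [hhat_int θ] at this
      linarith
    rw [← h1, hGinvG]
  have hhatDeriv : ∀ θ, HasDerivAt hhat (g θ / g (hhat θ)) θ := by
    intro θ
    have h1 : HasDerivAt (fun x => Ginv (G x + ℓ))
        ((g (Ginv (G θ + ℓ)))⁻¹ * g θ) θ :=
      HasDerivAt.comp θ (hGinvDeriv (G θ + ℓ)) ((hGderiv θ).add_const ℓ)
    have h2 : HasDerivAt hhat ((g (Ginv (G θ + ℓ)))⁻¹ * g θ) θ := by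
      apply h1.congr_of_eventuallyEq
      exact Filter.Eventually.of_forall (fun x => hhat_eq x)
    rw [← hhat_eq θ] at h2
    convert h2 using 1
    field_simp
  -- F : antiderivative of f*g
  set F : ℝ → ℝ := fun x => ∫ t in (0:ℝ)..x, f t * g t with hFdef
  have hFderiv : ∀ x, HasDerivAt F (f x * g x) x := ftc_hasDerivAt (hfc.mul hgc)
  have hFsub : ∀ a b : ℝ, F b - F a = ∫ t in a..b, f t * g t := fun a b =>
    intervalIntegral.integral_interval_sub_left ((hfc.mul hgc).intervalIntegrable 0 b)
      ((hfc.mul hgc).intervalIntegrable 0 a)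
  have h_eq : ∀ θ, h θ = F (hhat θ) - F θ := by
    intro θ; rw [hdef θ, hFsub]
  have hhDeriv : ∀ θ, HasDerivAt h (g θ * (f (hhat θ) - f θ)) θ := by
    intro θ
    have h1 : HasDerivAt (fun x => F (hhat x) - F x)
        (f (hhat θ) * g (hhat θ) * (g θ / g (hhat θ)) - f θ * g θ) θ :=
      (HasDerivAt.comp θ (hFderiv (hhat θ)) (hhatDeriv θ)).sub (hFderiv θ)
    have h2 := h1.congr_of_eventuallyEq (Filter.Eventually.of_forall h_eq)
    convert h2 using 1
    case e'_4 => rfl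
    case e'_5 => rfl
    have hne := hgne (hhat θ)
    field_simp
  have hderiv_h : deriv h = fun θ => g θ * (f (hhat θ) - f θ) :=
    funext fun θ => (hhDeriv θ).deriv
  -- second derivative
  have hgd : ∀ x, HasDerivAt g (deriv g x) x := fun x =>
    (hg.differentiable one_ne_zero x).hasDerivAt
  have hfd : ∀ x, HasDerivAt f (deriv f x) x := fun x =>
    (hf.differentiable one_ne_zero x).hasDerivAt
  have hh1Deriv : ∀ θ, HasDerivAt (fun θ => g θ * (f (hhat θ) - f θ))
      (deriv g θ * (f (hhat θ) - f θ) +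
        g θ * (deriv f (hhat θ) * (g θ / g (hhat θ)) - deriv f θ)) θ := by
    intro θ
    exact (hgd θ).mul
      (((HasDerivAt.comp θ (hfd (hhat θ)) (hhatDeriv θ))).sub (hfd θ))
  refine ⟨fun θ => (hhDeriv θ).differentiableAt, ?_, ?_⟩
  · intro θ
    rw [hderiv_h]
    exact (hh1Deriv θ).differentiableAt
  · intro θ hfeq
    rw [hderiv_h, (hh1Deriv θ).deriv, hfeq]
    have := hgne θ
    have := hgne (hhat θ)
    field_simp
    ring
end

section
/- First-order optimality condition for one sensor: if θ* ∈ ℝ satisfies h(θ*) ≥ h(θ) for all θ ∈ ℝ, then f(θ*) = f(ĥ(θ*)). -/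
open intervalIntegral

/-- First-order optimality condition for one sensor: a global maximizer `θ*` of
the single-sensor objective `h` satisfies `f(θ*) = f(ĥ(θ*))`. -/
theorem single_sensor_first_order_condition
    (g : ℝ → ℝ) (hg : Continuous g)
    (hgper : Function.Periodic g (2 * Real.pi))
    (hgpos : ∀ x, 0 < g x)
    (ℓ : ℝ) (hℓ : ℓ ∈ Set.Ioo 0 (∫ s in (0:ℝ)..(2 * Real.pi), g s))
    (hhat : ℝ → ℝ)
    (hhat_mem : ∀ θ, hhat θ ∈ Set.Ioo θ (θ + 2 * Real.pi))
    (hhat_int : ∀ θ, (∫ s in θ..(hhat θ), g s) = ℓ)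
    (f : ℝ → ℝ) (hf : Continuous f)
    (hfper : Function.Periodic f (2 * Real.pi))
    (h : ℝ → ℝ) (hdef : ∀ θ, h θ = ∫ s in θ..(hhat θ), f s * g s)
    (θstar : ℝ) (hmax : ∀ θ : ℝ, h θ ≤ h θstar) :
    f θstar = f (hhat θstar) := by
  have hg_int : ∀ a b : ℝ, IntervalIntegrable g MeasureTheory.volume a b :=
    fun a b => hg.intervalIntegrable a b
  have hfg_int : ∀ a b : ℝ, IntervalIntegrable (fun s => f s * g s) MeasureTheory.volume a b :=
    fun a b => (hf.mul hg).intervalIntegrable a b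
  set G : ℝ → ℝ := fun x => ∫ s in (0:ℝ)..x, g s with hG
  set F : ℝ → ℝ := fun x => ∫ s in (0:ℝ)..x, f s * g s with hF
  -- `G` relates to interval integrals
  have hGsub : ∀ a b : ℝ, G b - G a = ∫ s in a..b, g s := by
    intro a b
    rw [hG]
    simp only
    rw [← intervalIntegral.integral_add_adjacent_intervals (hg_int 0 a) (hg_int a b)]
    ring
  have hFsub : ∀ a b : ℝ, F b - F a = ∫ s in a..b, f s * g s := by
    intro a b
    rw [hF]
    simp only
    rw [← intervalIntegral.integral_add_adjacent_intervals (hfg_int 0 a) (hfg_int a b)]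
    ring
  -- `G` is strictly monotone
  have hGmono : StrictMono G := by
    intro a b hab
    have : 0 < ∫ s in a..b, g s :=
      intervalIntegral.intervalIntegral_pos_of_pos (hg_int a b) hgpos hab
    have := hGsub a b
    linarith
  -- `G` is surjective
  have two_pi_pos : (0:ℝ) < 2 * Real.pi := by positivity
  have hGcont : Continuous G := intervalIntegral.continuous_primitive hg_int 0
  have hGsurj : Function.Surjective G :=
    hGcont.surjective
      (hgper.tendsto_atTop_intervalIntegral_of_pos' (hg_int 0 (2 * Real.pi)) hgpos two_pi_pos)
      (hgper.tendsto_atBot_intervalIntegral_of_pos' (hg_int 0 (2 * Real.pi)) hgpos two_pi_pos)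
  -- The inverse of `G`
  let e : ℝ ≃o ℝ := StrictMono.orderIsoOfSurjective G hGmono hGsurj
  have he : ∀ x, e x = G x := fun x => rfl
  have hinv : ∀ y : ℝ, G (e.symm y) = y := fun y => by
    rw [← he]; exact e.apply_symm_apply y
  -- key identity: G (hhat θ) = G θ + ℓ
  have hkey : ∀ θ, G (hhat θ) = G θ + ℓ := by
    intro θ
    have := hGsub θ (hhat θ)
    rw [hhat_int θ] at this
    linarith
  -- hhat θ = e.symm (G θ + ℓ)
  have hhat_eq : ∀ θ, hhat θ = e.symm (G θ + ℓ) := by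
    intro θ
    have : G (hhat θ) = G (e.symm (G θ + ℓ)) := by rw [hkey θ, hinv]
    exact hGmono.injective this
  set a := hhat θstar with ha
  -- derivatives
  have hGa : HasDerivAt G (g a) a := (hg.integral_hasStrictDerivAt 0 a).hasDerivAt
  have hGθ : HasDerivAt G (g θstar) θstar := (hg.integral_hasStrictDerivAt 0 θstar).hasDerivAt
  have hga_ne : g a ≠ 0 := (hgpos a).ne'
  have hgθ_ne : g θstar ≠ 0 := (hgpos θstar).ne'
  have he_symm_cont : Continuous (e.symm : ℝ → ℝ) := OrderIso.continuous e.symm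
  have hsymm_at : e.symm (G θstar + ℓ) = a := (hhat_eq θstar).symm
  have hGa' : HasDerivAt G (g a) (e.symm (G θstar + ℓ)) := by rw [hsymm_at]; exact hGa
  have hψ : HasDerivAt (e.symm : ℝ → ℝ) (g a)⁻¹ (G θstar + ℓ) :=
    HasDerivAt.of_local_left_inverse (he_symm_cont.continuousAt) hGa' hga_ne
      (Filter.Eventually.of_forall hinv)
  have hGℓ : HasDerivAt (fun θ => G θ + ℓ) (g θstar) θstar := hGθ.add_const ℓ
  have hhat_deriv : HasDerivAt hhat ((g a)⁻¹ * g θstar) θstar := by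
    have := hψ.comp θstar hGℓ
    have heq : hhat = fun θ => e.symm (G θ + ℓ) := funext hhat_eq
    rw [heq]
    exact this
  -- h θ = F (hhat θ) - F θ
  have hh_eq : h = fun θ => F (hhat θ) - F θ := by
    funext θ
    rw [hdef θ, hFsub]
  have hFa : HasDerivAt F (f a * g a) a := ((hf.mul hg).integral_hasStrictDerivAt 0 a).hasDerivAt
  have hFθ : HasDerivAt F (f θstar * g θstar) θstar :=
    ((hf.mul hg).integral_hasStrictDerivAt 0 θstar).hasDerivAt
  have hh_deriv : HasDerivAt h (f a * g a * ((g a)⁻¹ * g θstar) - f θstar * g θstar) θstar := by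
    rw [hh_eq]
    exact (hFa.comp θstar hhat_deriv).sub hFθ
  -- local max ⟹ derivative zero
  have hlocal : IsLocalMax h θstar := by
    apply Filter.Eventually.of_forall
    intro x
    exact hmax x
  have hzero : f a * g a * ((g a)⁻¹ * g θstar) - f θstar * g θstar = 0 :=
    hlocal.hasDerivAt_eq_zero hh_deriv
  field_simp at hzero
  have h1 : g a * (f a * g θstar) = g a * (f θstar * g θstar) := by linear_combination g a * hzero
  have h2 : f a * g θstar = f θstar * g θstar := mul_left_cancel₀ hga_ne h1
  exact (mul_right_cancel₀ hgθ_ne h2).symm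
end
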